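/- arXiv:2112.12405 — 7 statements merged into one kernel-verified Lean document; each statement's English description precedes it below -/
import Mathlib

section
/- Let R be a commutative ring equipped with a Poisson bracket and let I be a Poisson ideal of R (i.e. {r, x} ∈ I for all r ∈ R and x ∈ I). Then the radical √I of I is also a Poisson ideal of R. -/
/-- The radical of a Poisson ideal of a commutative Poisson algebra `R`
(in characteristic zero) is again a Poisson ideal. -/
theorem radical_isPoisson {R : Type*} [CommRing R] [Algebra ℚ R]
    (br : R → R → R)
    (hadd_left : ∀ a b c : R, br (a + b) c = br a c + br b c)
    (hadd_right : ∀ a b c : R, br a (b + c) = br a b + br a c)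
    (hskew : ∀ a b : R, br a b = - br b a)
    (hjacobi : ∀ a b c : R, br a (br b c) + br b (br c a) + br c (br a b) = 0)
    (hleibniz : ∀ a b c : R, br a (b * c) = b * br a c + c * br a b)
    (I : Ideal R)
    (hI : ∀ r x : R, x ∈ I → br r x ∈ I) :
    ∀ r x : R, x ∈ I.radical → br r x ∈ I.radical := by
  intro r x hx
  set D : R → R := br r with hD
  have hmul : ∀ a b : R, D (a * b) = a * D b + b * D a := fun a b => hleibniz r a b
  have hD1 : D 1 = 0 := by
    have h1 : D 1 = D 1 + D 1 := by simpa using hmul 1 1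
    exact (right_eq_add.mp h1)
  -- D (a^(m+1)) = (m+1) * (a^m * D a)
  have hpow' : ∀ (a : R) (m : ℕ), D (a ^ (m + 1)) = ((m + 1 : ℕ) : R) * (a ^ m * D a) := by
    intro a m
    induction m with
    | zero => simp
    | succ m ih =>
      rw [pow_succ', hmul, ih]
      push_cast
      ring
  -- a * D (a^m) = m * (a^m * D a), valid also for m = 0
  have hpow : ∀ (a : R) (m : ℕ), a * D (a ^ m) = ((m : ℕ) : R) * (a ^ m * D a) := by
    intro a m
    cases m with
    | zero => simp [hD1]
    | succ m => rw [hpow' a m]; push_cast; ring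
  obtain ⟨n, hn⟩ := hx
  have key : ∀ j m : ℕ, m + j = n → x ^ m * D x ^ (2 * j) ∈ I := by
    intro j
    induction j with
    | zero =>
      intro m hm
      have : m = n := by omega
      subst this
      simpa using hn
    | succ j ih =>
      intro m hm
      have ihm : x ^ (m + 1) * D x ^ (2 * j) ∈ I := ih (m + 1) (by omega)
      have h1 : D (x ^ (m + 1) * D x ^ (2 * j)) ∈ I := hI r _ ihm
      have h2 : D (x ^ (m + 1) * D x ^ (2 * j)) * D x ∈ I := I.mul_mem_right _ h1
      have hp1 : D (x ^ (m + 1)) = ((m + 1 : ℕ) : R) * (x ^ m * D x) := hpow' x m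
      have hp2 : D x * D (D x ^ (2 * j)) = ((2 * j : ℕ) : R) * (D x ^ (2 * j) * D (D x)) :=
        hpow (D x) (2 * j)
      have expand : D (x ^ (m + 1) * D x ^ (2 * j)) * D x
          = ((m + 1 : ℕ) : R) * (x ^ m * D x ^ (2 * (j + 1)))
            + ((2 * j : ℕ) : R) * D (D x) * (x ^ (m + 1) * D x ^ (2 * j)) := by
        rw [hmul]
        push_cast
        push_cast at hp1 hp2
        linear_combination (x ^ (m + 1)) * hp2 + (D x ^ (2 * j + 1)) * hp1
      have h3 : ((m + 1 : ℕ) : R) * (x ^ m * D x ^ (2 * (j + 1))) ∈ I := by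
        have h4 := I.sub_mem h2 (I.mul_mem_left (((2 * j : ℕ) : R) * D (D x)) ihm)
        rwa [expand, add_sub_cancel_right] at h4
      have hc : algebraMap ℚ R (((m : ℚ) + 1)⁻¹) * ((m + 1 : ℕ) : R) = 1 := by
        rw [show ((m + 1 : ℕ) : R) = algebraMap ℚ R ((m : ℚ) + 1) by
              rw [show ((m : ℚ) + 1) = ((m + 1 : ℕ) : ℚ) by push_cast; ring, map_natCast],
          ← map_mul, inv_mul_cancel₀ (show (m : ℚ) + 1 ≠ 0 by positivity), map_one]
      have h5 := I.mul_mem_left (algebraMap ℚ R (((m : ℚ) + 1)⁻¹)) h3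
      rwa [← mul_assoc, hc, one_mul] at h5
  exact ⟨2 * n, by simpa using key n 0 (by omega)⟩
end

section
/- Let R be a commutative noetherian ring with a Poisson bracket and let I be a Poisson ideal of R. Then every minimal prime ideal of R containing I is a Poisson ideal. -/
open Finset in
lemma iter_leibniz' {R : Type*} [CommRing R] (D : R →+ R)
    (hmul : ∀ a b : R, D (a * b) = a * D b + b * D a) :
    ∀ (n : ℕ) (a b : R), (⇑D)^[n] (a * b) =
      ∑ k ∈ Finset.range (n + 1), n.choose k • ((⇑D)^[n - k] a * (⇑D)^[k] b) := by
  intro n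
  induction n with
  | zero => intro a b; simp [Finset.range]
  | succ n IH =>
    intro p q
    calc
      (⇑D)^[n + 1] (p * q) =
          D (∑ k ∈ range n.succ,
              n.choose k • ((⇑D)^[n - k] p * (⇑D)^[k] q)) := by
        rw [Function.iterate_succ_apply', IH]
      _ = (∑ k ∈ range n.succ,
            n.choose k • ((⇑D)^[n - k + 1] p * (⇑D)^[k] q)) +
          ∑ k ∈ range n.succ,
            n.choose k • ((⇑D)^[n - k] p * (⇑D)^[k + 1] q) := by
        rw [map_sum, ← sum_add_distrib]
        refine sum_congr rfl fun k _ => ?_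
        rw [AddMonoidHom.map_nsmul, hmul, smul_add, Function.iterate_succ_apply',
          Function.iterate_succ_apply', add_comm, mul_comm ((⇑D)^[k] q)]
      _ = (∑ k ∈ range n.succ,
                n.choose k.succ • ((⇑D)^[n - k] p * (⇑D)^[k + 1] q)) +
              1 • ((⇑D)^[n + 1] p * (⇑D)^[0] q) +
            ∑ k ∈ range n.succ, n.choose k • ((⇑D)^[n - k] p * (⇑D)^[k + 1] q) :=
        ?_
      _ = ((∑ k ∈ range n.succ, n.choose k • ((⇑D)^[n - k] p * (⇑D)^[k + 1] q)) +
              ∑ k ∈ range n.succ,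
                n.choose k.succ • ((⇑D)^[n - k] p * (⇑D)^[k + 1] q)) +
            1 • ((⇑D)^[n + 1] p * (⇑D)^[0] q) := by
        rw [add_comm, add_assoc]
      _ = (∑ i ∈ range n.succ,
              (n + 1).choose (i + 1) • ((⇑D)^[n + 1 - (i + 1)] p * (⇑D)^[i + 1] q)) +
            1 • ((⇑D)^[n + 1] p * (⇑D)^[0] q) := by
        simp_rw [Nat.choose_succ_succ, Nat.succ_sub_succ, add_smul, sum_add_distrib]
      _ = ∑ k ∈ range n.succ.succ,
            n.succ.choose k • ((⇑D)^[n.succ - k] p * (⇑D)^[k] q) := by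
        rw [sum_range_succ' _ n.succ, Nat.choose_zero_right, tsub_zero]
    congr
    refine (sum_range_succ' _ _).trans (congr_arg₂ (· + ·) ?_ ?_)
    · rw [sum_range_succ, Nat.choose_succ_self, zero_smul, add_zero]
      refine sum_congr rfl fun k hk => ?_
      rw [mem_range] at hk
      congr
      omega
    · rw [Nat.choose_zero_right, tsub_zero]

/-- Every minimal prime over a Poisson ideal of a commutative noetherian
Poisson algebra (in characteristic zero) is a Poisson ideal. -/
theorem minimalPrime_isPoisson {R : Type*} [CommRing R] [IsNoetherianRing R] [Algebra ℚ R]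
    (br : R → R → R)
    (hadd_left : ∀ a b c : R, br (a + b) c = br a c + br b c)
    (hadd_right : ∀ a b c : R, br a (b + c) = br a b + br a c)
    (hskew : ∀ a b : R, br a b = - br b a)
    (hjacobi : ∀ a b c : R, br a (br b c) + br b (br c a) + br c (br a b) = 0)
    (hleibniz : ∀ a b c : R, br a (b * c) = b * br a c + c * br a b)
    (I : Ideal R)
    (hI : ∀ r x : R, x ∈ I → br r x ∈ I) :
    ∀ p ∈ I.minimalPrimes, ∀ r x : R, x ∈ p → br r x ∈ p := by
  classical
  intro p hp r x hx
  have hprime : p.IsPrime := hp.1.1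
  have hpI : I ≤ p := hp.1.2
  set D : R →+ R := AddMonoidHom.mk' (br r) (hadd_right r) with hD
  have hDmul : ∀ a b : R, D (a * b) = a * D b + b * D a := hleibniz r
  have key := iter_leibniz' D hDmul
  have hsmul : ∀ (c a : R), (∀ k, (⇑D)^[k] a ∈ p) → ∀ k, (⇑D)^[k] (c * a) ∈ p := by
    intro c a ha k
    rw [key k c a]
    exact Ideal.sum_mem _ fun i _ =>
      Submodule.smul_of_tower_mem _ _ (Ideal.mul_mem_left _ _ (ha i))
  let J : Ideal R :=
    { carrier := {a | ∀ k, (⇑D)^[k] a ∈ p}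
      zero_mem' := fun k => by simp
      add_mem' := fun {a b} ha hb k => by
        rw [iterate_map_add]; exact Ideal.add_mem _ (ha k) (hb k)
      smul_mem' := fun c a ha => hsmul c a ha }
  have hJmem : ∀ a : R, a ∈ J ↔ ∀ k, (⇑D)^[k] a ∈ p := fun a => Iff.rfl
  have hJle : J ≤ p := fun a ha => by simpa using (hJmem a).1 ha 0
  have hID : ∀ a ∈ I, ∀ k, (⇑D)^[k] a ∈ I := by
    intro a ha k
    induction k with
    | zero => simpa
    | succ n ih => rw [Function.iterate_succ_apply']; exact hI r _ ih
  have hIJ : I ≤ J := fun a ha => (hJmem a).2 fun k => hpI (hID a ha k)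
  have hJprime : J.IsPrime := by
    rw [Ideal.isPrime_iff]
    constructor
    · intro h
      have h1 : (1 : R) ∈ J := h ▸ Submodule.mem_top
      have := (hJmem 1).1 h1 0
      simp only [Function.iterate_zero, id_eq] at this
      exact hprime.ne_top ((Ideal.eq_top_iff_one p).2 this)
    · intro a b hab
      by_contra hcon
      push_neg at hcon
      obtain ⟨ha, hb⟩ := hcon
      have ha' : ∃ k, (⇑D)^[k] a ∉ p := by
        by_contra h; push_neg at h; exact ha ((hJmem a).2 h)
      have hb' : ∃ k, (⇑D)^[k] b ∉ p := by
        by_contra h; push_neg at h; exact hb ((hJmem b).2 h)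
      set i := Nat.find ha' with hi_def
      set j := Nat.find hb' with hj_def
      have hi : (⇑D)^[i] a ∉ p := Nat.find_spec ha'
      have hj : (⇑D)^[j] b ∉ p := Nat.find_spec hb'
      have hmem := (hJmem _).1 hab (i + j)
      rw [key] at hmem
      have hjlt : j ∈ Finset.range (i + j + 1) := by
        rw [Finset.mem_range]; omega
      rw [← Finset.add_sum_erase _ _ hjlt] at hmem
      have hrest : ∑ k ∈ (Finset.range (i + j + 1)).erase j,
          (i + j).choose k • ((⇑D)^[i + j - k] a * (⇑D)^[k] b) ∈ p := by
        refine Ideal.sum_mem _ fun k hk => Submodule.smul_of_tower_mem _ _ ?_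
        have hkne : k ≠ j := Finset.ne_of_mem_erase hk
        have hkle : k ≤ i + j := by
          have := Finset.mem_of_mem_erase hk
          rw [Finset.mem_range] at this; omega
        rcases lt_or_gt_of_ne hkne with h | h
        · exact Ideal.mul_mem_left _ _ (not_not.1 (Nat.find_min hb' h))
        · exact Ideal.mul_mem_right _ _
            (not_not.1 (Nat.find_min ha' (show i + j - k < i by omega)))
      have hterm : (i + j).choose j • ((⇑D)^[i + j - j] a * (⇑D)^[j] b) ∈ p :=
        (Ideal.add_mem_iff_left p hrest).1 hmem
      rw [Nat.add_sub_cancel, nsmul_eq_mul] at hterm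
      have hCunit : IsUnit (((i + j).choose j : R)) := by
        have h1 : (((i + j).choose j : ℕ) : ℚ) ≠ 0 :=
          Nat.cast_ne_zero.2 (Nat.choose_pos (Nat.le_add_left j i)).ne'
        have h2 := (isUnit_iff_ne_zero.2 h1).map (algebraMap ℚ R)
        rwa [map_natCast] at h2
      rcases hprime.mem_or_mem hterm with h | h
      · exact hprime.ne_top (p.eq_top_of_isUnit_mem h hCunit)
      · rcases hprime.mem_or_mem h with h | h
        · exact hi h
        · exact hj h
  have hple : p ≤ J := hp.2 ⟨hJprime, hIJ⟩ hJle
  have := (hJmem x).1 (hple hx) 1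
  exact this
end

section
/- Let R be a commutative ℂ-algebra with a Poisson bracket, and let G be a finite group acting on R by ℂ-algebra automorphisms preserving the Poisson bracket ({g r, g r'} = g {r, r'}). Let I be the ideal of R generated by all elements g(r) − r for g ∈ G, r ∈ R. Then I^G := I ∩ R^G is a Poisson ideal of the Poisson algebra R^G of G-invariants. -/
/-- Let `G` be a finite group acting on a commutative Poisson `ℂ`-algebra `R` by
algebra automorphisms preserving the Poisson bracket, and let `I` be the ideal
generated by the elements `g r - r`.  Then `I^G = I ∩ R^G` is a Poisson ideal of
the invariant algebra `R^G`: the bracket of an invariant element with an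
invariant element of `I` again lies in `I` and is invariant. -/
theorem invariant_ideal_isPoisson {R : Type*} [CommRing R] [Algebra ℂ R]
    (br : R → R → R)
    (hadd_left : ∀ a b c : R, br (a + b) c = br a c + br b c)
    (hadd_right : ∀ a b c : R, br a (b + c) = br a b + br a c)
    (hskew : ∀ a b : R, br a b = - br b a)
    (hjacobi : ∀ a b c : R, br a (br b c) + br b (br c a) + br c (br a b) = 0)
    (hleibniz : ∀ a b c : R, br a (b * c) = b * br a c + c * br a b)
    {G : Type*} [Group G] [Finite G] (ρ : G →* (R ≃ₐ[ℂ] R))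
    (hequiv : ∀ (g : G) (a b : R), br (ρ g a) (ρ g b) = ρ g (br a b))
    (I : Ideal R) (hI : I = Ideal.span {x : R | ∃ (g : G) (r : R), x = ρ g r - r}) :
    ∀ r x : R, (∀ g : G, ρ g r = r) → x ∈ I → (∀ g : G, ρ g x = x) →
      br r x ∈ I ∧ ∀ g : G, ρ g (br r x) = br r x := by
  intro r x hr hxI hxinv
  have hzero : ∀ a : R, br a 0 = 0 := by
    intro a
    have h := hadd_right a 0 0
    simpa using h.symm
  refine ⟨?_, ?_⟩
  · -- membership in I
    subst hI
    have key : ∀ y ∈ Ideal.span {x : R | ∃ (g : G) (r : R), x = ρ g r - r},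
        y ∈ Ideal.span {x : R | ∃ (g : G) (r : R), x = ρ g r - r} ∧
        br r y ∈ Ideal.span {x : R | ∃ (g : G) (r : R), x = ρ g r - r} := by
      intro y hy
      refine Submodule.span_induction ?_ ?_ ?_ ?_ hy
      · -- generators
        rintro z ⟨g, t, rfl⟩
        refine ⟨Ideal.subset_span ⟨g, t, rfl⟩, ?_⟩
        have hneg : ∀ u : R, br r (-u) = - br r u := by
          intro u
          have h := hadd_right r u (-u)
          rw [add_neg_cancel, hzero] at h
          linear_combination -h
        have : br r (ρ g t - t) = ρ g (br r t) - br r t := by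
          have h1 := hequiv g r t
          rw [hr] at h1
          rw [sub_eq_add_neg, hadd_right, hneg, h1, ← sub_eq_add_neg]
        rw [this]
        exact Ideal.subset_span ⟨g, br r t, rfl⟩
      · exact ⟨Submodule.zero_mem _, by rw [hzero]; exact Submodule.zero_mem _⟩
      · rintro a b _ _ ⟨haI, haB⟩ ⟨hbI, hbB⟩
        exact ⟨Submodule.add_mem _ haI hbI, by rw [hadd_right]; exact Submodule.add_mem _ haB hbB⟩
      · rintro a b _ ⟨hbI, hbB⟩
        refine ⟨Submodule.smul_mem _ a hbI, ?_⟩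
        have : a • b = a * b := rfl
        rw [this, hleibniz]
        exact Submodule.add_mem _ (Ideal.mul_mem_left _ _ hbB) (Ideal.mul_mem_right _ _ hbI)
    exact (key x hxI).2
  · intro g
    rw [← hequiv g, hr g, hxinv g]
end

section
/- Let R be a commutative noetherian ℚ-algebra, G a finite group acting on R by ring automorphisms, and I a G-stable ideal of R. Let J be the ideal of R generated by I^G = I ∩ R^G. Then there exists a natural number m such that I^m ⊆ J. -/
open Polynomial

/-- Let `R` be a commutative noetherian `ℚ`-algebra, `G` a finite group acting on
`R` by ring automorphisms, `I` a `G`-stable ideal of `R` and `J` the ideal of `R`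
generated by the `G`-invariant elements of `I`.  Then `I ^ m ⊆ J` for some `m`. -/
theorem pow_le_span_invariants {R : Type*} [CommRing R] [IsNoetherianRing R] [Algebra ℚ R]
    {G : Type*} [Group G] [Finite G] [MulSemiringAction G R]
    (I : Ideal R) (hI : ∀ g : G, ∀ x ∈ I, g • x ∈ I)
    (J : Ideal R) (hJ : J = Ideal.span {x : R | x ∈ I ∧ ∀ g : G, g • x = x}) :
    ∃ m : ℕ, I ^ m ≤ J := by
  letI : Fintype G := Fintype.ofFinite G
  rcases subsingleton_or_nontrivial R with hR | hR
  · exact ⟨0, by intro y _; rw [Subsingleton.elim y 0]; exact J.zero_mem⟩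
  set n := Fintype.card G with hn
  have hrad : I ≤ J.radical := by
    intro x hx
    refine ⟨n, ?_⟩
    set P : R[X] := ∏ g : G, (X - C (g • x)) with hP
    have hmonic : P.Monic := monic_prod_of_monic _ _ fun g _ => monic_X_sub_C _
    have hdeg : P.natDegree = n := by
      rw [hP, natDegree_prod_of_monic _ _ fun g _ => monic_X_sub_C _]
      simp [natDegree_X_sub_C, natDegree_X, hn]
    have heval : P.eval x = 0 := by
      rw [hP, eval_prod]
      exact Finset.prod_eq_zero (Finset.mem_univ (1 : G)) (by simp)
    -- multiset form
    set s : Multiset R := Finset.univ.val.map (fun g : G => g • x) with hs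
    have hcard : Multiset.card s = n := by simp [hs, hn]
    have hPs : P = (s.map fun t => X - C t).prod := by
      rw [hP, Finset.prod_eq_multiset_prod, hs, Multiset.map_map]
      rfl
    have hcoeffI : ∀ k, k < n → P.coeff k ∈ I := by
      intro k hk
      rw [hPs, Multiset.prod_X_sub_C_coeff s (by omega : k ≤ Multiset.card s), hcard]
      refine Ideal.mul_mem_left _ _ ?_
      unfold Multiset.esymm
      refine multiset_sum_mem _ ?_
      intro t ht
      rw [Multiset.mem_map] at ht
      obtain ⟨u, hu, rfl⟩ := ht
      rw [Multiset.mem_powersetCard] at hu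
      have hu0 : u ≠ 0 := by
        intro h0
        rw [h0] at hu
        simp at hu
        omega
      obtain ⟨a, ha⟩ := Multiset.exists_mem_of_ne_zero hu0
      obtain ⟨u', rfl⟩ := Multiset.exists_cons_of_mem ha
      rw [Multiset.prod_cons]
      have haI : a ∈ I := by
        have : a ∈ s := Multiset.mem_of_le hu.1 (Multiset.mem_cons_self a u')
        rw [hs, Multiset.mem_map] at this
        obtain ⟨g, _, rfl⟩ := this
        exact hI g x hx
      exact Ideal.mul_mem_right _ _ haI
    have hinv : ∀ (g : G) (k : ℕ), g • P.coeff k = P.coeff k := by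
      intro g k
      have hmap : P.map (MulSemiringAction.toRingHom G R g) = P := by
        rw [hP, Polynomial.map_prod]
        simp only [Polynomial.map_sub, map_X, map_C]
        exact Fintype.prod_equiv (Equiv.mulLeft g) _ _ (by
          intro h
          simp [MulSemiringAction.toRingHom_apply, mul_smul])
      conv_rhs => rw [← hmap]
      rw [coeff_map]
      rfl
    have hcoeffJ : ∀ k, k < n → P.coeff k ∈ J := by
      intro k hk
      rw [hJ]
      exact Ideal.subset_span ⟨hcoeffI k hk, fun g => hinv g k⟩
    -- conclude x ^ n ∈ J
    have hsum : x ^ n = -∑ i ∈ Finset.range n, P.coeff i * x ^ i := by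
      have := Polynomial.eval_eq_sum_range' (p := P) (n := n + 1) (by omega) x
      rw [Finset.sum_range_succ] at this
      have hlead : P.coeff n = 1 := by
        have := hmonic.coeff_natDegree
        rwa [hdeg] at this
      rw [hlead, one_mul, heval] at this
      linear_combination -this
    rw [hsum]
    exact neg_mem (Ideal.sum_mem _ fun i hi =>
      Ideal.mul_mem_right _ _ (hcoeffJ i (Finset.mem_range.mp hi)))
  obtain ⟨m, hm⟩ := Ideal.exists_radical_pow_le_of_fg J (IsNoetherian.noetherian _)
  exact ⟨m, le_trans (Ideal.pow_right_mono hrad m) hm⟩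
end

section
/- Let R be a commutative ring containing ℚ, G a finite group acting on R by ring automorphisms, I a G-stable ideal of R, and J the ideal of R generated by I^G = I ∩ R^G. Then for every natural number j, the G-invariants of J^j equal the j-th power of I^G viewed inside R^G: (J^j)^G = (I^G)^j (as ideals of R^G, where (I^G)^j denotes the ideal of R^G generated by products of j elements of I^G). -/
/-- Let `R` be a commutative `ℚ`-algebra, `G` a finite group acting on `R` by ring
automorphisms, `I` a `G`-stable ideal, `S = R^G` the invariant subring, and `J` the
ideal of `R` generated by `I^G = I ∩ R^G`.  Then for every `j`, the `G`-invariants of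
`J ^ j` coincide with the `j`-th power of the ideal `I^G` of `R^G`. -/
theorem invariants_of_pow_eq_pow_of_invariants {R : Type*} [CommRing R] [Algebra ℚ R]
    {G : Type*} [Group G] [Finite G] [MulSemiringAction G R]
    (I : Ideal R) (hI : ∀ g : G, ∀ x ∈ I, g • x ∈ I)
    (S : Subring R) (hS : ∀ x : R, x ∈ S ↔ ∀ g : G, g • x = x)
    (J : Ideal R) (hJ : J = Ideal.span {x : R | x ∈ I ∧ ∀ g : G, g • x = x}) :
    ∀ j : ℕ, (J ^ j).comap S.subtype = (I.comap S.subtype) ^ j := by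
  classical
  have : Fintype G := Fintype.ofFinite G
  set K : Ideal S := I.comap S.subtype with hK
  have hset : {x : R | x ∈ I ∧ ∀ g : G, g • x = x} = S.subtype '' (K : Set S) := by
    ext x
    constructor
    · rintro ⟨hxI, hxinv⟩
      exact ⟨⟨x, (hS x).2 hxinv⟩, hxI, rfl⟩
    · rintro ⟨z, hz, rfl⟩
      exact ⟨hz, (hS _).1 z.2⟩
  have hJmap : J = Ideal.map S.subtype K := by
    rw [hJ, hset]; rfl
  -- the averaging (Reynolds) operator
  set n : ℕ := Fintype.card G with hn
  set c : R := algebraMap ℚ R (n : ℚ)⁻¹ with hc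
  set π : R → R := fun r => c * ∑ g : G, g • r with hπ
  have hfixalg : ∀ (g : G) (q : ℚ), g • (algebraMap ℚ R q) = algebraMap ℚ R q := by
    intro g q
    have h : (MulSemiringAction.toRingHom G R g).comp (algebraMap ℚ R) = algebraMap ℚ R :=
      Subsingleton.elim _ _
    exact RingHom.congr_fun h q
  have hπS : ∀ r : R, π r ∈ S := by
    intro r
    rw [hS]
    intro g
    have : g • π r = (g • c) * ∑ h : G, (g * h) • r := by
      simp [hπ, smul_mul', Finset.smul_sum, mul_smul]
    rw [this, hfixalg]
    congr 1
    exact Fintype.sum_equiv (Equiv.mulLeft g) _ _ (fun h => rfl)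
  have hπfix : ∀ r : R, (∀ g : G, g • r = r) → π r = r := by
    intro r hr
    have h1 : π r = c * (n • r) := by
      simp [hπ, hr, Finset.sum_const, hn]
    rw [h1, nsmul_eq_mul, ← mul_assoc]
    have hn0 : (n : ℚ) ≠ 0 := by
      simp [hn, Fintype.card_ne_zero]
    have : c * (n : R) = 1 := by
      rw [hc, ← map_natCast (algebraMap ℚ R) n, ← map_mul, inv_mul_cancel₀ hn0, map_one]
    rw [this, one_mul]
  have hπmul : ∀ (a y : R), (∀ g : G, g • y = y) → π (a * y) = π a * y := by
    intro a y hy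
    simp only [hπ, smul_mul', hy, ← Finset.sum_mul, mul_assoc]
  -- key lemma: comap ∘ map = id for ideals of the invariant subring
  have hcomap : ∀ L : Ideal S, (Ideal.map S.subtype L).comap S.subtype = L := by
    intro L
    refine le_antisymm ?_ (Ideal.le_comap_map)
    intro x hx
    have hx' : (x : R) ∈ Ideal.span (S.subtype '' (L : Set S)) := hx
    obtain ⟨d, hsupp, hsum⟩ := Submodule.mem_span_set.mp hx'
    have hz : ∀ y ∈ d.support, ∃ z : S, z ∈ L ∧ (z : R) = y := by
      intro y hy
      obtain ⟨z, hzL, hzy⟩ := hsupp hy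
      exact ⟨z, hzL, hzy⟩
    choose z hz1 hz2 using hz
    have hyinv : ∀ y (hy : y ∈ d.support), ∀ g : G, g • y = y := by
      intro y hy
      have : y ∈ S := by rw [← hz2 y hy]; exact (z y hy).2
      exact (hS y).1 this
    -- x = π x = ∑ π (d y) * y
    have hxinv : ∀ g : G, g • (x : R) = (x : R) := (hS _).1 x.2
    have hxsum : (x : R) = ∑ y ∈ d.support.attach, π (d y.1) * y.1 := by
      have h0 : (x : R) = ∑ y ∈ d.support, d y * y := by
        rw [← hsum, Finsupp.sum]
        simp [smul_eq_mul]
      have h1 : π (x : R) = (x : R) := hπfix _ hxinv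
      calc (x : R) = π (x : R) := h1.symm
        _ = π (∑ y ∈ d.support.attach, d y.1 * y.1) := by
            rw [Finset.sum_attach d.support (fun y => d y * y), ← h0]
        _ = c * ∑ g : G, ∑ y ∈ d.support.attach, g • (d y.1 * y.1) := by
            simp [hπ, Finset.smul_sum]
        _ = ∑ y ∈ d.support.attach, (c * ∑ g : G, g • (d y.1 * y.1)) := by
            rw [Finset.sum_comm, Finset.mul_sum]
        _ = ∑ y ∈ d.support.attach, π (d y.1) * y.1 := by
            refine Finset.sum_congr rfl (fun y _ => ?_)
            exact hπmul (d y.1) y.1 (hyinv y.1 y.2)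
    set t : S := ∑ y ∈ d.support.attach, (⟨π (d y.1), hπS _⟩ : S) * z y.1 y.2 with ht
    have htL : t ∈ L :=
      Ideal.sum_mem _ (fun y _ => Ideal.mul_mem_left _ _ (hz1 y.1 y.2))
    have htx : t = x := by
      apply Subtype.ext
      push_cast [ht]
      rw [hxsum]
      exact Finset.sum_congr rfl (fun y _ => by rw [hz2 y.1 y.2])
    rwa [htx] at htL
  intro j
  rw [hJmap, ← Ideal.map_pow, hcomap]
end

section
/- Let R be a commutative noetherian ℚ-algebra, G a finite group acting on R by ring automorphisms, and I a G-stable ideal. Then the G-invariants of the I-adic completion of R are canonically isomorphic to the (I^G)-adic completion of R^G: (R̂_I)^G ≅ (R^G)^∧_{I^G}. -/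
open Polynomial

section Aux

variable {R : Type*} [CommRing R] [Algebra ℚ R]
variable {G : Type*} [Group G] [Fintype G] [MulSemiringAction G R]

lemma smul_ratsmul (g : G) (q : ℚ) (x : R) : g • (q • x) = q • (g • x) := by
  have h : (MulSemiringAction.toRingHom G R g).comp (algebraMap ℚ R) = algebraMap ℚ R :=
    Subsingleton.elim _ _
  rw [Algebra.smul_def, Algebra.smul_def, smul_mul']
  congr 1
  exact RingHom.congr_fun h q

lemma ringHom_esymm_map {A : Type*} [CommRing A] (σ : A →+* A) (s : Multiset A) (j : ℕ) :
    σ (s.esymm j) = (s.map σ).esymm j := by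
  rw [Multiset.esymm, map_multiset_sum, Multiset.map_map, Multiset.esymm,
    Multiset.powersetCard_map, Multiset.map_map]
  exact congrArg Multiset.sum (Multiset.map_congr rfl fun t _ => map_multiset_prod σ t)

variable (G) in
noncomputable def avg (x : R) : R := (Fintype.card G : ℚ)⁻¹ • ∑ g : G, g • x

variable (G) in
noncomputable def avgHom : R →+ R where
  toFun := avg G
  map_zero' := by simp [avg]
  map_add' a b := by simp [avg, Finset.sum_add_distrib, smul_add]

lemma smul_avg (g : G) (x : R) : g • avg G x = avg G x := by
  rw [avg, smul_ratsmul]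
  congr 1
  have : ∀ h : G, g • (h • x) = (g * h) • x := fun h => (mul_smul g h x).symm
  rw [Finset.smul_sum, Finset.sum_congr rfl fun h _ => this h]
  exact Fintype.sum_equiv (Equiv.mulLeft g) _ _ fun h => rfl

variable (S : Subring R) (hS : ∀ x : R, x ∈ S ↔ ∀ g : G, g • x = x)

include hS in
lemma avg_mem (x : R) : avg G x ∈ S := (hS _).2 fun g => smul_avg g x

include hS in
lemma avg_of_mem {x : R} (hx : x ∈ S) : avg G x = x := by
  have h1 : ∀ g : G, g • x = x := (hS x).1 hx
  have : ∑ g : G, g • x = (Fintype.card G : ℚ) • x := by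
    rw [Finset.sum_congr rfl fun g _ => h1 g, Finset.sum_const, Finset.card_univ,
      Nat.cast_smul_eq_nsmul]
  rw [avg, this, smul_smul, inv_mul_cancel₀ (by exact_mod_cast Fintype.card_ne_zero), one_smul]

include hS in
lemma avg_mul_mem {s : R} (hs : s ∈ S) (x : R) : avg G (s * x) = s * avg G x := by
  have h1 : ∀ g : G, g • (s * x) = s * (g • x) := fun g => by
    rw [smul_mul', (hS s).1 hs g]
  rw [avg, Finset.sum_congr rfl fun g _ => h1 g, ← Finset.mul_sum, avg, mul_smul_comm]

lemma ratsmul_mem_ideal (J : Ideal R) (q : ℚ) {x : R} (hx : x ∈ J) : q • x ∈ J := by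
  rw [Algebra.smul_def]; exact J.mul_mem_left _ hx

lemma avg_mem_ideal (J : Ideal R) (hJ : ∀ g : G, ∀ x ∈ J, g • x ∈ J) {x : R} (hx : x ∈ J) :
    avg G x ∈ J :=
  ratsmul_mem_ideal J _ (Submodule.sum_mem J fun g _ => hJ g x hx)

lemma avg_sub_self_mem_ideal (J : Ideal R) {x : R} (hx : ∀ g : G, g • x - x ∈ J) :
    avg G x - x ∈ J := by
  have hx' : (Fintype.card G : ℚ)⁻¹ • ((Fintype.card G : ℕ) • x) = x := by
    rw [← Nat.cast_smul_eq_nsmul ℚ, smul_smul,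
      inv_mul_cancel₀ (by exact_mod_cast Fintype.card_ne_zero (α := G)), one_smul]
  have : avg G x - x = (Fintype.card G : ℚ)⁻¹ • ∑ g : G, (g • x - x) := by
    rw [Finset.sum_sub_distrib, smul_sub, Finset.sum_const, Finset.card_univ, hx', avg]
  rw [this]
  exact ratsmul_mem_ideal J _ (Submodule.sum_mem J fun g _ => hx g)

include hS in
lemma exists_lift_sum (J : Ideal S) {α : Type*} (t : Finset α) (φ : α → R)
    (h : ∀ a ∈ t, ∃ y : S, y ∈ J ∧ (y : R) = φ a) :
    ∃ y : S, y ∈ J ∧ (y : R) = ∑ a ∈ t, φ a := by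
  classical
  induction t using Finset.induction with
  | empty => exact ⟨0, J.zero_mem, by simp⟩
  | insert a t hat ih =>
    obtain ⟨y1, hy1, hv1⟩ := h _ (Finset.mem_insert_self _ _)
    obtain ⟨y2, hy2, hv2⟩ := ih fun a ha => h a (Finset.mem_insert_of_mem ha)
    exact ⟨y1 + y2, J.add_mem hy1 hy2, by
      rw [Finset.sum_insert hat, ← hv1, ← hv2]; rfl⟩

include hS in
lemma avg_mem_map (J : Ideal S) {x : R} (hx : x ∈ Ideal.map S.subtype J) :
    ∃ y : S, y ∈ J ∧ (y : R) = avg G x := by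
  classical
  rw [Ideal.map, Ideal.span, Submodule.mem_span_set] at hx
  obtain ⟨c, hsupp, hsum⟩ := hx
  rw [← hsum, Finsupp.sum]
  have hmap : avg G (∑ a ∈ c.support, c a • a) = ∑ a ∈ c.support, avg G (c a • a) :=
    map_sum (avgHom G) _ _
  rw [hmap]
  refine exists_lift_sum S hS J _ _ fun a ha => ?_
  obtain ⟨ya, hya, rfl⟩ := hsupp ha
  refine ⟨ya * ⟨avg G (c (S.subtype ya)), avg_mem S hS _⟩, J.mul_mem_right _ hya, ?_⟩
  show (ya : R) * avg G (c (S.subtype ya)) = avg G (c (S.subtype ya) • S.subtype ya)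
  rw [smul_eq_mul, mul_comm (c (S.subtype ya)) (S.subtype ya)]
  exact (avg_mul_mem S hS (s := S.subtype ya) ya.2 (c (S.subtype ya))).symm

include hS in
lemma pow_card_mem_map [Nontrivial R] (I : Ideal R) (hI : ∀ g : G, ∀ x ∈ I, g • x ∈ I)
    (K : Ideal S) (hK : K = I.comap S.subtype) {x : R} (hx : x ∈ I) :
    x ^ Fintype.card G ∈ Ideal.map S.subtype K := by
  classical
  set s : Multiset R := Finset.univ.val.map (fun g : G => g • x) with hs
  have hcard : Multiset.card s = Fintype.card G := by simp [hs]
  set P : R[X] := (s.map fun a => X - C a).prod with hP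
  have hmonic : P.Monic :=
    monic_multiset_prod_of_monic s _ fun a _ => monic_X_sub_C a
  have hdeg : P.natDegree = Fintype.card G := by
    have h1 : ∀ f ∈ s.map (fun a => X - C a), f.Monic := by
      intro f hf; obtain ⟨a, _, rfl⟩ := Multiset.mem_map.1 hf; exact monic_X_sub_C a
    rw [hP, natDegree_multiset_prod_of_monic _ h1, Multiset.map_map]
    simp only [Function.comp_def, natDegree_X_sub_C, Multiset.map_const', Multiset.sum_replicate,
      smul_eq_mul, mul_one, hcard]
  have hxs : x ∈ s := Multiset.mem_map.2 ⟨1, (by rw [Finset.mem_val]; exact Finset.mem_univ _), one_smul G x⟩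
  have hevalP : P.eval x = 0 := by
    rw [hP, eval_multiset_prod, Multiset.map_map]
    exact Multiset.prod_eq_zero (Multiset.mem_map.2 ⟨x, hxs, by simp⟩)
  -- membership of elements of s in I
  have hsI : ∀ a ∈ s, a ∈ I := by
    intro a ha
    obtain ⟨g, _, rfl⟩ := Multiset.mem_map.1 ha
    exact hI g x hx
  -- invariance of s
  have hsinv : ∀ g : G, s.map (fun a => g • a) = s := by
    intro g
    rw [hs, Multiset.map_map]
    have h1 : Finset.univ.val.map (fun h : G => g * h) = Finset.univ.val := by
      have := Finset.map_univ_equiv (Equiv.mulLeft g)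
      calc Finset.univ.val.map (fun h : G => g * h)
          = (Finset.univ.map (Equiv.mulLeft g).toEmbedding).val := by
            rw [Finset.map_val]; rfl
        _ = Finset.univ.val := by rw [this]
    calc Finset.univ.val.map ((fun a => g • a) ∘ fun h : G => h • x)
        = (Finset.univ.val.map (fun h : G => g * h)).map (fun h : G => h • x) := by
          rw [Multiset.map_map]
          exact Multiset.map_congr rfl fun h _ => (mul_smul g h x).symm
      _ = s := by rw [h1, hs]
  -- coefficients of P lie in (the image of) K, for k < card G
  have hcoeff : ∀ k < Fintype.card G, ∃ y : S, y ∈ K ∧ (y : R) = P.coeff k := by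
    intro k hk
    have hkle : k ≤ Multiset.card s := by rw [hcard]; exact hk.le
    have hco := Multiset.prod_X_sub_C_coeff s hkle
    have hj1 : 1 ≤ Multiset.card s - k := by omega
    -- esymm s (card s - k) ∈ I
    have hesI : s.esymm (Multiset.card s - k) ∈ I := by
      rw [Multiset.esymm]
      refine multiset_sum_mem _ ?_
      intro z hz
      obtain ⟨t, ht, rfl⟩ := Multiset.mem_map.1 hz
      rw [Multiset.mem_powersetCard] at ht
      obtain ⟨hts, htc⟩ := ht
      obtain ⟨a, hat⟩ := Multiset.card_pos_iff_exists_mem.1 (by rw [htc]; omega)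
      rw [← Multiset.cons_erase hat, Multiset.prod_cons]
      exact I.mul_mem_right _ (hsI a (Multiset.mem_of_le hts hat))
    -- esymm s j ∈ S
    have hesS : s.esymm (Multiset.card s - k) ∈ S := by
      rw [hS]
      intro g
      have : g • s.esymm (Multiset.card s - k)
          = (s.map fun a => g • a).esymm (Multiset.card s - k) :=
        ringHom_esymm_map (MulSemiringAction.toRingHom G R g) s _
      rw [this, hsinv g]
    refine ⟨(-1 : S) ^ (Multiset.card s - k) * ⟨_, hesS⟩, ?_, ?_⟩
    · exact K.mul_mem_left _ (by rw [hK]; exact Ideal.mem_comap.2 hesI)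
    · push_cast
      rw [hco]
  -- x ^ card G = - ∑_{k < card G} coeff k * x ^ k
  have hsum : (0 : R) = ∑ k ∈ Finset.range (Fintype.card G + 1), P.coeff k * x ^ k := by
    rw [← hevalP, eval_eq_sum_range, hdeg]
  rw [Finset.sum_range_succ, ← hdeg, hmonic.coeff_natDegree, one_mul, hdeg] at hsum
  have hxpow : x ^ Fintype.card G =
      ∑ k ∈ Finset.range (Fintype.card G), -(P.coeff k * x ^ k) := by
    rw [Finset.sum_neg_distrib]
    linear_combination -hsum
  rw [hxpow]
  refine Submodule.sum_mem _ fun k hk => ?_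
  obtain ⟨y, hy, hval⟩ := hcoeff k (Finset.mem_range.1 hk)
  refine neg_mem (Ideal.mul_mem_right _ _ ?_)
  rw [← hval]
  exact Ideal.mem_map_of_mem _ hy

end Aux


set_option maxHeartbeats 1000000 in
set_option synthInstance.maxHeartbeats 200000 in
/-- Let `R` be a commutative noetherian `ℚ`-algebra, `G` a finite group acting on `R`
by ring automorphisms and `I` a `G`-stable ideal.  The `I`-adic completion of `R` is
realized as the subring `C` of `∀ n, R ⧸ I ^ n` of compatible families; the `G`-action
descends to it, and we cut out the invariant compatible families (invariance being
expressed on representatives).  Similarly the `I^G`-adic completion of `S = R^G` is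
realized as the subring `D` of compatible families, where `K = I ∩ S` is the ideal
`I^G` of `S`.  Then `(R̂_I)^G` and `(R^G)^∧_{I^G}` are isomorphic as rings. -/
theorem invariants_of_adicCompletion {R : Type*} [CommRing R] [IsNoetherianRing R] [Algebra ℚ R]
    {G : Type*} [Group G] [Finite G] [MulSemiringAction G R]
    (I : Ideal R) (hI : ∀ g : G, ∀ x ∈ I, g • x ∈ I)
    (S : Subring R) (hS : ∀ x : R, x ∈ S ↔ ∀ g : G, g • x = x)
    (K : Ideal S) (hK : K = I.comap S.subtype)
    (C : Subring (∀ n : ℕ, R ⧸ I ^ n))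
    (hC : (C : Set (∀ n : ℕ, R ⧸ I ^ n)) =
      {f | (∀ m n : ℕ, ∀ h : m ≤ n,
              Ideal.Quotient.factor (S := I ^ n) (T := I ^ m) (Ideal.pow_le_pow_right h) (f n) = f m) ∧
           (∀ (g : G) (n : ℕ) (x : R),
              Ideal.Quotient.mk (I ^ n) x = f n → Ideal.Quotient.mk (I ^ n) (g • x) = f n)})
    (D : Subring (∀ n : ℕ, S ⧸ K ^ n))
    (hD : (D : Set (∀ n : ℕ, S ⧸ K ^ n)) =
      {f | ∀ m n : ℕ, ∀ h : m ≤ n,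
              Ideal.Quotient.factor (S := K ^ n) (T := K ^ m) (Ideal.pow_le_pow_right h) (f n) = f m}) :
    Nonempty (C ≃+* D) := by
  classical
  cases nonempty_fintype G
  have hCm := Set.ext_iff.mp hC
  have hDm := Set.ext_iff.mp hD
  rcases subsingleton_or_nontrivial R with hRs | hRn
  · -- trivial case
    haveI h0 : ∀ (J : Ideal R), Subsingleton (R ⧸ J) := fun J =>
      ⟨fun a b => by
        obtain ⟨a, rfl⟩ := Ideal.Quotient.mk_surjective a
        obtain ⟨b, rfl⟩ := Ideal.Quotient.mk_surjective b
        rw [Subsingleton.elim a b]⟩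
    haveI h2 : Subsingleton S := ⟨fun a b => Subtype.ext (Subsingleton.elim _ _)⟩
    haveI h0' : ∀ (J : Ideal S), Subsingleton (S ⧸ J) := fun J =>
      ⟨fun a b => by
        obtain ⟨a, rfl⟩ := Ideal.Quotient.mk_surjective a
        obtain ⟨b, rfl⟩ := Ideal.Quotient.mk_surjective b
        rw [Subsingleton.elim a b]⟩
    haveI h1 : Subsingleton (∀ n : ℕ, R ⧸ I ^ n) := inferInstance
    haveI h3 : Subsingleton (∀ n : ℕ, S ⧸ K ^ n) := inferInstance
    haveI h4 : Subsingleton C := ⟨fun a b => Subtype.ext (Subsingleton.elim _ _)⟩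
    haveI h5 : Subsingleton D := ⟨fun a b => Subtype.ext (Subsingleton.elim _ _)⟩
    refine ⟨{ toFun := fun _ => 1
              invFun := fun _ => 1
              left_inv := fun _ => Subsingleton.elim _ _
              right_inv := fun _ => Subsingleton.elim _ _
              map_mul' := fun _ _ => Subsingleton.elim _ _
              map_add' := fun _ _ => Subsingleton.elim _ _ }⟩
  -- stability of powers of I
  have hmapI : ∀ g : G, Ideal.map (MulSemiringAction.toRingHom G R g) I = I := by
    intro g
    apply le_antisymm
    · rw [Ideal.map_le_iff_le_comap]
      intro x hx
      exact hI g x hx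
    · intro x hx
      have hxe : x = MulSemiringAction.toRingHom G R g (g⁻¹ • x) := by
        show x = g • g⁻¹ • x
        rw [smul_smul, mul_inv_cancel, one_smul]
      rw [hxe]
      exact Ideal.mem_map_of_mem _ (hI g⁻¹ x hx)
  have hIpow : ∀ (n : ℕ) (g : G), ∀ x ∈ I ^ n, g • x ∈ I ^ n := by
    intro n g x hx
    have h1 : Ideal.map (MulSemiringAction.toRingHom G R g) (I ^ n) = I ^ n := by
      rw [Ideal.map_pow, hmapI]
    rw [← h1]
    exact Ideal.mem_map_of_mem _ hx
  -- powers of K sit inside powers of I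
  have hKpow : ∀ (n : ℕ) (y : S), y ∈ K ^ n → (y : R) ∈ I ^ n := by
    intro n y hy
    rw [hK] at hy
    exact Ideal.le_comap_pow _ n hy
  -- find m with I ^ m ≤ K R
  have hrad : I ≤ (Ideal.map S.subtype K).radical := fun x hx =>
    ⟨Fintype.card G, pow_card_mem_map S hS I hI K hK hx⟩
  obtain ⟨m0, hm0⟩ := Ideal.exists_pow_le_of_le_radical_of_fg hrad (IsNoetherian.noetherian I)
  set m : ℕ := m0 + 1 with hmdef
  have hm : I ^ m ≤ Ideal.map S.subtype K :=
    le_trans (Ideal.pow_le_pow_right (by omega)) hm0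
  have hm1 : 1 ≤ m := by omega
  have hnmn : ∀ n : ℕ, n ≤ m * n := fun n => Nat.le_mul_of_pos_left n (by omega)
  -- the comparison of topologies
  have hcomp : ∀ (n : ℕ) (y : S), (y : R) ∈ I ^ (m * n) → y ∈ K ^ n := by
    intro n y hy
    have hy1 : (y : R) ∈ (I ^ m) ^ n := by rw [← pow_mul]; exact hy
    have hy2 : (y : R) ∈ Ideal.map S.subtype (K ^ n) := by
      rw [Ideal.map_pow]
      exact Ideal.pow_right_mono hm n hy1
    obtain ⟨z, hz, hzval⟩ := avg_mem_map S hS (K ^ n) hy2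
    have : z = y := Subtype.ext (by rw [hzval, avg_of_mem S hS y.2])
    rwa [← this]
  -- representatives
  choose rep hrep using fun (j : ℕ) (y : R ⧸ I ^ j) => Ideal.Quotient.mk_surjective y
  choose repS hrepS using fun (j : ℕ) (y : S ⧸ K ^ j) => Ideal.Quotient.mk_surjective y
  set AvgS : R → S := fun x => ⟨avg G x, avg_mem S hS x⟩ with hAvgS
  -- invariance modulo powers
  have hinv : ∀ (f : ∀ n, R ⧸ I ^ n), f ∈ C → ∀ (j : ℕ) (x : R),
      Ideal.Quotient.mk (I ^ j) x = f j → avg G x - x ∈ I ^ j := by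
    intro f hf j x hx
    obtain ⟨hf1, hf2⟩ := (hCm f).1 hf
    refine avg_sub_self_mem_ideal _ fun g => ?_
    have h2 := hf2 g j x hx
    rw [← hx] at h2
    exact Ideal.Quotient.eq.1 h2
  -- the component maps
  set Φ : C → ∀ n : ℕ, S ⧸ K ^ n :=
    fun f n => Ideal.Quotient.mk (K ^ n) (AvgS (rep (m * n) (f.1 (m * n)))) with hΦ
  have key : ∀ (f : C) (n : ℕ) (x : R),
      Ideal.Quotient.mk (I ^ (m * n)) x = f.1 (m * n) →
      Ideal.Quotient.mk (K ^ n) (AvgS x) = Φ f n := by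
    intro f n x hx
    rw [hΦ]
    rw [Ideal.Quotient.eq]
    set x0 := rep (m * n) (f.1 (m * n)) with hx0def
    have hx0 : Ideal.Quotient.mk (I ^ (m * n)) x0 = f.1 (m * n) := hrep _ _
    have hdiff : x - x0 ∈ I ^ (m * n) := Ideal.Quotient.eq.1 (hx.trans hx0.symm)
    have havg : avg G (x - x0) ∈ I ^ (m * n) :=
      avg_mem_ideal _ (fun g y hy => hIpow _ g y hy) hdiff
    refine hcomp n _ ?_
    have hval : ((AvgS x - AvgS x0 : S) : R) = avg G (x - x0) := by
      show avg G x - avg G x0 = avg G (x - x0)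
      exact (map_sub (avgHom G) x x0).symm
    rw [hval]
    exact havg
  -- Φ lands in D
  have hΦD : ∀ f : C, Φ f ∈ D := by
    intro f
    obtain ⟨hf1, _⟩ := (hCm f.1).1 f.2
    have : Φ f ∈ (D : Set (∀ n : ℕ, S ⧸ K ^ n)) := by
      rw [hD]
      intro n n' hnn'
      set x := rep (m * n') (f.1 (m * n')) with hxdef
      have hx' : Ideal.Quotient.mk (I ^ (m * n')) x = f.1 (m * n') := hrep _ _
      have hxn : Ideal.Quotient.mk (I ^ (m * n)) x = f.1 (m * n) := by
        have hle : m * n ≤ m * n' := Nat.mul_le_mul_left m hnn'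
        rw [← hf1 (m * n) (m * n') hle, ← hx', Ideal.Quotient.factor_mk]
      calc Ideal.Quotient.factor (S := K ^ n') (T := K ^ n) (Ideal.pow_le_pow_right hnn') (Φ f n')
          = Ideal.Quotient.mk (K ^ n) (AvgS x) := by
            rw [hΦ, Ideal.Quotient.factor_mk]
        _ = Φ f n := key f n x hxn
    exact this
  -- the ring hom
  have hmul : ∀ (f f' : C) (n : ℕ), Φ (f * f') n = Φ f n * Φ f' n := by
    intro f f' n
    set x := rep (m * n) (f.1 (m * n)) with hxdef
    set x' := rep (m * n) (f'.1 (m * n)) with hx'def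
    have hx : Ideal.Quotient.mk (I ^ (m * n)) x = f.1 (m * n) := hrep _ _
    have hx' : Ideal.Quotient.mk (I ^ (m * n)) x' = f'.1 (m * n) := hrep _ _
    have hxx' : Ideal.Quotient.mk (I ^ (m * n)) (x * x') = (f * f').1 (m * n) := by
      rw [map_mul, hx, hx']; rfl
    have ha := hinv f.1 f.2 (m * n) x hx
    have hb := hinv f'.1 f'.2 (m * n) x' hx'
    have hc := hinv (f * f').1 (f * f').2 (m * n) (x * x') hxx'
    have hdiff : avg G (x * x') - avg G x * avg G x' ∈ I ^ (m * n) := by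
      have hident : avg G (x * x') - avg G x * avg G x'
          = (avg G (x * x') - x * x') - (avg G x - x) * (avg G x' - x')
            - (avg G x - x) * x' - x * (avg G x' - x') := by ring
      rw [hident]
      exact Submodule.sub_mem _ (Submodule.sub_mem _ (Submodule.sub_mem _ hc
        (Ideal.mul_mem_right _ _ ha)) (Ideal.mul_mem_right _ _ ha))
        (Ideal.mul_mem_left _ _ hb)
    have h1 : Ideal.Quotient.mk (K ^ n) (AvgS (x * x')) = Φ (f * f') n := key (f * f') n _ hxx'
    have h2 : Ideal.Quotient.mk (K ^ n) (AvgS x) = Φ f n := key f n _ hx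
    have h3 : Ideal.Quotient.mk (K ^ n) (AvgS x') = Φ f' n := key f' n _ hx'
    rw [← h1, ← h2, ← h3, ← map_mul (Ideal.Quotient.mk (K ^ n)), Ideal.Quotient.eq]
    exact hcomp n _ hdiff
  have hadd : ∀ (f f' : C) (n : ℕ), Φ (f + f') n = Φ f n + Φ f' n := by
    intro f f' n
    set x := rep (m * n) (f.1 (m * n)) with hxdef
    set x' := rep (m * n) (f'.1 (m * n)) with hx'def
    have hx : Ideal.Quotient.mk (I ^ (m * n)) x = f.1 (m * n) := hrep _ _
    have hx' : Ideal.Quotient.mk (I ^ (m * n)) x' = f'.1 (m * n) := hrep _ _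
    have hxx' : Ideal.Quotient.mk (I ^ (m * n)) (x + x') = (f + f').1 (m * n) := by
      rw [map_add, hx, hx']; rfl
    have h1 : Ideal.Quotient.mk (K ^ n) (AvgS (x + x')) = Φ (f + f') n := key (f + f') n _ hxx'
    have h2 : Ideal.Quotient.mk (K ^ n) (AvgS x) = Φ f n := key f n _ hx
    have h3 : Ideal.Quotient.mk (K ^ n) (AvgS x') = Φ f' n := key f' n _ hx'
    have h4 : AvgS (x + x') = AvgS x + AvgS x' := Subtype.ext (map_add (avgHom G) x x')
    rw [← h1, ← h2, ← h3, h4, map_add]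
  have hone : ∀ n : ℕ, Φ (1 : C) n = 1 := by
    intro n
    have hx1 : Ideal.Quotient.mk (I ^ (m * n)) (1 : R) = (1 : C).1 (m * n) := by
      rw [map_one]; rfl
    have h1 : Ideal.Quotient.mk (K ^ n) (AvgS 1) = Φ 1 n := key 1 n 1 hx1
    have h2 : AvgS 1 = 1 := Subtype.ext (avg_of_mem S hS S.one_mem)
    rw [← h1, h2, map_one]
  let φ : C →+* D :=
    { toFun := fun f => ⟨Φ f, hΦD f⟩
      map_one' := Subtype.ext (funext fun n => hone n)
      map_mul' := fun f f' => Subtype.ext (funext fun n => hmul f f' n)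
      map_add' := fun f f' => Subtype.ext (funext fun n => hadd f f' n)
      map_zero' := by
        have h0 : ∀ n, Φ (0 : C) n = 0 := by
          intro n
          have hx0 : Ideal.Quotient.mk (I ^ (m * n)) (0 : R) = (0 : C).1 (m * n) := by
            rw [map_zero]; rfl
          have h1 : Ideal.Quotient.mk (K ^ n) (AvgS 0) = Φ 0 n := key 0 n 0 hx0
          have h2 : AvgS 0 = 0 := Subtype.ext (by
            show avg G (0 : R) = 0
            exact map_zero (avgHom G))
          rw [← h1, h2, map_zero]
        exact Subtype.ext (funext fun n => h0 n) }
  -- injectivity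
  have hker : ∀ f : C, φ f = 0 → f = 0 := by
    intro f hf0
    apply Subtype.ext
    funext j
    obtain ⟨hf1, _⟩ := (hCm f.1).1 f.2
    set x := rep (m * j) (f.1 (m * j)) with hxdef
    have hx : Ideal.Quotient.mk (I ^ (m * j)) x = f.1 (m * j) := hrep _ _
    have hΦ0 : Φ f j = 0 := congrFun (congrArg Subtype.val hf0) j
    have havgK : AvgS x ∈ K ^ j := by
      rw [← Ideal.Quotient.eq_zero_iff_mem]
      exact hΦ0
    have havgI : avg G x ∈ I ^ j := hKpow j _ havgK
    have hxI : x ∈ I ^ j := by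
      have h1 : avg G x - x ∈ I ^ (m * j) := hinv f.1 f.2 (m * j) x hx
      have h2 : avg G x - x ∈ I ^ j := Ideal.pow_le_pow_right (hnmn j) h1
      have : x = avg G x - (avg G x - x) := by ring
      rw [this]
      exact Submodule.sub_mem _ havgI h2
    have : f.1 j = Ideal.Quotient.mk (I ^ j) x := by
      rw [← hf1 j (m * j) (hnmn j), ← hx, Ideal.Quotient.factor_mk]
    rw [this]
    exact Ideal.Quotient.eq_zero_iff_mem.2 hxI
  have hinj : Function.Injective φ := by
    intro a b hab
    have h1 : φ (a - b) = 0 := by rw [map_sub, hab, sub_self]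
    have h2 := hker (a - b) h1
    rwa [sub_eq_zero] at h2
  -- surjectivity
  have hsurj : Function.Surjective φ := by
    intro d
    set F : ∀ j : ℕ, R ⧸ I ^ j :=
      fun j => Ideal.Quotient.mk (I ^ j) ((repS j (d.1 j) : S) : R) with hFdef
    have hd1 := (hDm d.1).1 d.2
    have hF : F ∈ C := by
      have : F ∈ (C : Set (∀ n : ℕ, R ⧸ I ^ n)) := by
        rw [hC]
        constructor
        · intro j j' hjj'
          set s' := repS j' (d.1 j') with hs'def
          set s := repS j (d.1 j) with hsdef
          have h1 : Ideal.Quotient.mk (K ^ j) s' = d.1 j := by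
            rw [← hd1 j j' hjj', ← hrepS j' (d.1 j'), Ideal.Quotient.factor_mk]
          have h2 : Ideal.Quotient.mk (K ^ j) s = d.1 j := hrepS _ _
          have h3 : s' - s ∈ K ^ j := Ideal.Quotient.eq.1 (h1.trans h2.symm)
          have h4 : ((s' : R) - (s : R)) ∈ I ^ j := hKpow j _ h3
          show Ideal.Quotient.factor _ (F j') = F j
          rw [hFdef]
          show Ideal.Quotient.factor _ (Ideal.Quotient.mk (I ^ j') (s' : R)) = _
          rw [Ideal.Quotient.factor_mk, Ideal.Quotient.eq]
          exact h4
        · intro g j x hx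
          set s := repS j (d.1 j) with hsdef
          have h1 : x - (s : R) ∈ I ^ j := Ideal.Quotient.eq.1 hx
          have h2 : g • x - (s : R) ∈ I ^ j := by
            have h3 : g • (x - (s : R)) ∈ I ^ j := hIpow j g _ h1
            have h4 : g • (s : R) = (s : R) := (hS (s : R)).1 s.2 g
            rw [smul_sub, h4] at h3
            exact h3
          show Ideal.Quotient.mk (I ^ j) (g • x) = F j
          rw [hFdef]
          show _ = Ideal.Quotient.mk (I ^ j) (s : R)
          rw [Ideal.Quotient.eq]
          exact h2
      exact this
    refine ⟨⟨F, hF⟩, ?_⟩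
    apply Subtype.ext
    funext n
    show Φ ⟨F, hF⟩ n = d.1 n
    set s := repS (m * n) (d.1 (m * n)) with hsdef
    have hx : Ideal.Quotient.mk (I ^ (m * n)) ((s : S) : R) = F (m * n) := rfl
    have h1 : Ideal.Quotient.mk (K ^ n) (AvgS (s : R)) = Φ ⟨F, hF⟩ n := key ⟨F, hF⟩ n _ hx
    have h2 : AvgS ((s : S) : R) = s := Subtype.ext (avg_of_mem S hS s.2)
    have h3 : d.1 n = Ideal.Quotient.mk (K ^ n) s := by
      rw [← hd1 n (m * n) (hnmn n), ← hrepS (m * n) (d.1 (m * n)), Ideal.Quotient.factor_mk]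
    rw [← h1, h2, h3]
  exact ⟨RingEquiv.ofBijective φ ⟨hinj, hsurj⟩⟩
end

section
/- Let W be a finite subgroup of GL(V) and P a parabolic subgroup (stabilizer of a point). Then the pointwise stabilizer in W of the fixed subspace V^P equals P, and the setwise stabilizer of V^P equals the normalizer N_W(P). -/
/-- Let `W` be a finite group acting linearly on a finite-dimensional complex vector
space `V` and let `P = W_v` be a parabolic subgroup.  Then the pointwise stabilizer in
`W` of the fixed subspace `V^P` equals `P`, and the setwise stabilizer of `V^P` equals
the normalizer `N_W(P)`. -/
theorem stabilizers_of_fixed_subspace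
    {V : Type*} [AddCommGroup V] [Module ℂ V] [FiniteDimensional ℂ V]
    {W : Type*} [Group W] [Finite W] [DistribMulAction W V] [SMulCommClass W ℂ V]
    (v : V) (P : Subgroup W) (hP : P = MulAction.stabilizer W v) :
    (∀ w : W, (∀ u : V, (∀ p ∈ P, p • u = u) → w • u = u) ↔ w ∈ P)
    ∧
    (∀ w : W, ((w • ·) '' {u : V | ∀ p ∈ P, p • u = u} = {u : V | ∀ p ∈ P, p • u = u}) ↔
        w ∈ Subgroup.normalizer (P : Set W)) := by
  have hv : v ∈ {u : V | ∀ p ∈ P, p • u = u} := by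
    intro p hp
    rw [hP] at hp
    exact hp
  constructor
  · intro w
    constructor
    · intro h
      rw [hP]
      exact h v hv
    · intro hw u hu
      exact hu w hw
  · intro w
    constructor
    · intro h
      rw [Subgroup.mem_normalizer_iff]
      have h1 : w • v ∈ {u : V | ∀ p ∈ P, p • u = u} := h ▸ Set.mem_image_of_mem _ hv
      have h2 : w⁻¹ • v ∈ {u : V | ∀ p ∈ P, p • u = u} := by
        have : v ∈ (w • ·) '' {u : V | ∀ p ∈ P, p • u = u} := h.symm ▸ hv
        obtain ⟨u, hu, huv⟩ := this
        have : w⁻¹ • v = u := by rw [← huv, inv_smul_smul]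
        rwa [this]
      intro p
      constructor
      · intro hp
        have := h2 p hp
        rw [hP, MulAction.mem_stabilizer_iff]
        calc (w * p * w⁻¹) • v = w • p • w⁻¹ • v := by rw [mul_smul, mul_smul]
          _ = w • w⁻¹ • v := by rw [this]
          _ = v := smul_inv_smul w v
      · intro hp
        have h3 := h1 (w * p * w⁻¹) hp
        have : w • p • v = w • v := by
          calc w • p • v = (w * p * w⁻¹) • w • v := by
                rw [mul_smul, mul_smul, inv_smul_smul]
            _ = w • v := h3
        have hpv : p • v = v := smul_left_cancel w this
        rw [hP, MulAction.mem_stabilizer_iff]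
        exact hpv
    · intro hw
      apply Set.Subset.antisymm
      · rintro _ ⟨u, hu, rfl⟩
        intro p hp
        have hmem : w⁻¹ * p * w ∈ P := by
          have hiff := Subgroup.mem_normalizer_iff.mp hw (w⁻¹ * p * w)
          apply hiff.mpr
          have : w * (w⁻¹ * p * w) * w⁻¹ = p := by group
          rwa [this]
        have := hu _ hmem
        calc p • w • u = w • (w⁻¹ * p * w) • u := by
              rw [← mul_smul, ← mul_smul]; congr 1; group
          _ = w • u := by rw [this]
      · intro u hu
        refine ⟨w⁻¹ • u, ?_, smul_inv_smul w u⟩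
        intro p hp
        have hmem : w * p * w⁻¹ ∈ P := (Subgroup.mem_normalizer_iff.mp hw p).mp hp
        have := hu _ hmem
        calc p • w⁻¹ • u = w⁻¹ • (w * p * w⁻¹) • u := by
              rw [← mul_smul, ← mul_smul]; congr 1; group
          _ = w⁻¹ • u := by rw [this]
end
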